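/- (No false alarms in nominal operation.) Let F, S, H, K1, K̂, B, K be real n×n matrices with K̂ = K1 + F·H, and let κ, μ > 0 satisfy ‖exp(s·F)‖ ≤ κ·e^{−μ·s} for all s ≥ 0. Let w : ℝ → ℝⁿ be continuous with ‖w(t)‖ ≤ w̄ and ρ : ℝ → ℝⁿ be continuously differentiable with ‖ρ(t)‖ ≤ ρ̄ for all t. Let e : ℝ → ℝⁿ be differentiable and satisfy, for all t ≥ 0, ė(t) = F·e(t) + S·(w(t) + B·K·ρ(t)) − K1·ρ(t) − H·ρ̇(t), and suppose ‖e(0)‖ ≤ ē₀. Then for all t ≥ 0 the residual r(t) = e(t) + ρ(t) satisfies ‖r(t)‖ ≤ κ·e^{−μ·t}·(ē₀ + ‖H‖·ρ̄) + ‖H‖·ρ̄ + ∫_{0}^{t} κ·e^{−μ(t−τ)}·(‖S‖·w̄ + ‖S·B·K − K̂‖·ρ̄) dτ + ρ̄. -/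

import Mathlib

set_option maxHeartbeats 1000000

open NormedSpace intervalIntegral MeasureTheory

theorem myexp_smul_add {n : ℕ} (F : EuclideanSpace ℝ (Fin n) →L[ℝ] EuclideanSpace ℝ (Fin n))
    (s t : ℝ) : exp (s • F) * exp (t • F) = exp ((s+t) • F) := by
  letI : NormedAlgebra ℚ (EuclideanSpace ℝ (Fin n) →L[ℝ] EuclideanSpace ℝ (Fin n)) :=
    NormedAlgebra.restrictScalars ℚ ℝ _
  have hc : Commute (s • F) (t • F) := by
    show _ = _
    ext v
    simp only [ContinuousLinearMap.mul_apply, ContinuousLinearMap.smul_apply,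
      ContinuousLinearMap.map_smul, PiLp.smul_apply, smul_eq_mul]
    ring
  rw [← exp_add_of_commute hc, show s • F + t • F = (s+t) • F from (add_smul s t F).symm]

theorem myexp_inv {n : ℕ} (F : EuclideanSpace ℝ (Fin n) →L[ℝ] EuclideanSpace ℝ (Fin n)) (t : ℝ) :
    exp (t • F) * exp (-(t • F)) = 1 := by
  rw [show -(t • F) = (-t) • F from (neg_smul t F).symm, myexp_smul_add, add_neg_cancel,
    show (0:ℝ) • F = 0 from zero_smul ℝ F, exp_zero]

/-- **No false alarms in nominal operation (Statement 7).**
Matrices are continuous linear maps on Euclidean space (so `‖·‖` is the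
operator norm induced by the Euclidean norm), with matrix product `*`.
Assume `Khat = K1 + F·H`, `κ, μ > 0` with `‖exp(s F)‖ ≤ κ e^{−μ s}` for
`s ≥ 0`, bounded noises (`w` continuous with `‖w‖ ≤ wbar`, `ρ` C¹ with
`‖ρ‖ ≤ ρbar`), the nominal error dynamics
`ė(t) = F e(t) + S (w(t) + B K ρ(t)) − K1 ρ(t) − H ρ̇(t)` for `t ≥ 0`, and
`‖e(0)‖ ≤ ebar0`. Then for all `t ≥ 0` the residual `r(t) = e(t) + ρ(t)`
stays below the time-varying detection threshold, i.e.
`‖r(t)‖ ≤ κ e^{−μ t} (ebar0 + ‖H‖ ρbar) + ‖H‖ ρbar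
          + ∫_0^t κ e^{−μ (t−τ)} (‖S‖ wbar + ‖S B K − Khat‖ ρbar) dτ + ρbar`. -/
theorem no_false_alarms {n : ℕ}
    (F S H K1 Khat B K : EuclideanSpace ℝ (Fin n) →L[ℝ] EuclideanSpace ℝ (Fin n))
    (hKhat : Khat = K1 + F * H)
    (κ μ : ℝ) (hκ : 0 < κ) (hμ : 0 < μ)
    (hFdecay : ∀ s : ℝ, 0 ≤ s → ‖NormedSpace.exp (s • F)‖ ≤ κ * Real.exp (-μ * s))
    (w ρ ρ' : ℝ → EuclideanSpace ℝ (Fin n))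
    (wbar ρbar : ℝ)
    (hw : Continuous w)
    (hρ : ∀ t : ℝ, HasDerivAt ρ (ρ' t) t) (hρ' : Continuous ρ')
    (hwbound : ∀ t : ℝ, ‖w t‖ ≤ wbar)
    (hρbound : ∀ t : ℝ, ‖ρ t‖ ≤ ρbar)
    (e : ℝ → EuclideanSpace ℝ (Fin n))
    (hode : ∀ t : ℝ, 0 ≤ t →
      HasDerivAt e
        (F (e t) + S (w t + (B * K) (ρ t)) - K1 (ρ t) - H (ρ' t)) t)
    (ebar0 : ℝ) (hinit : ‖e 0‖ ≤ ebar0) :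
    ∀ t : ℝ, 0 ≤ t →
      ‖e t + ρ t‖ ≤
        κ * Real.exp (-μ * t) * (ebar0 + ‖H‖ * ρbar) + ‖H‖ * ρbar
        + (∫ τ in (0:ℝ)..t,
            κ * Real.exp (-μ * (t - τ)) * (‖S‖ * wbar + ‖S * B * K - Khat‖ * ρbar))
        + ρbar := by
  intro t ht
  letI : NormedAlgebra ℚ (EuclideanSpace ℝ (Fin n) →L[ℝ] EuclideanSpace ℝ (Fin n)) :=
    NormedAlgebra.restrictScalars ℚ ℝ _
  set G := S * B * K - Khat with hG
  have hρc : Continuous ρ := by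
    rw [continuous_iff_continuousAt]; exact fun τ => (hρ τ).continuousAt
  set g : ℝ → EuclideanSpace ℝ (Fin n) := fun τ => S (w τ) + G (ρ τ) with hgdef
  have hgc : Continuous g := (S.continuous.comp hw).add (G.continuous.comp hρc)
  set C : ℝ := ‖S‖ * wbar + ‖G‖ * ρbar with hC
  have hgbound : ∀ τ : ℝ, ‖g τ‖ ≤ C := by
    intro τ
    refine (norm_add_le _ _).trans (add_le_add ?_ ?_)
    · exact (S.le_opNorm _).trans (mul_le_mul_of_nonneg_left (hwbound τ) (norm_nonneg S))
    · exact (G.le_opNorm _).trans (mul_le_mul_of_nonneg_left (hρbound τ) (norm_nonneg G))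
  set z : ℝ → EuclideanSpace ℝ (Fin n) := fun τ => e τ + H (ρ τ) with hzdef
  have hzderiv : ∀ τ : ℝ, 0 ≤ τ → HasDerivAt z (F (z τ) + g τ) τ := by
    intro τ hτ
    have h1 := (hode τ hτ).add (H.hasFDerivAt.comp_hasDerivAt τ (hρ τ))
    refine h1.congr_deriv ?_
    simp only [hzdef, hgdef, hG, hKhat, map_add, map_sub, ContinuousLinearMap.mul_apply,
      ContinuousLinearMap.add_apply, ContinuousLinearMap.sub_apply]
    abel
  -- derivative of τ ↦ exp((-τ)•F) (z τ)
  have hφderiv : ∀ τ : ℝ, 0 ≤ τ →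
      HasDerivAt (fun u : ℝ => exp (-(u • F)) (z u)) (exp (-(τ • F)) (g τ)) τ := by
    intro τ hτ
    have hE : HasDerivAt (fun u : ℝ => exp (-(u • F)))
        (-(exp (-(τ • F)) * F)) τ := by
      have h2 := HasDerivAt.scomp (x := τ) (hasDerivAt_exp_smul_const F (-τ)) (hasDerivAt_neg τ)
      simpa [Function.comp_def] using h2
    have h3 := hE.clm_apply (hzderiv τ hτ)
    refine h3.congr_deriv ?_
    simp only [ContinuousLinearMap.neg_apply, ContinuousLinearMap.mul_apply, map_add]
    abel
  have hEc : Continuous fun τ : ℝ => exp (-(τ • F)) :=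
    exp_continuous.comp ((continuous_id.smul continuous_const).neg)
  have hintc : Continuous fun τ : ℝ => exp (-(τ • F)) (g τ) := hEc.clm_apply hgc
  have hint : IntervalIntegrable (fun τ : ℝ => exp (-(τ • F)) (g τ)) volume 0 t :=
    hintc.intervalIntegrable 0 t
  have hFTC : ∫ τ in (0:ℝ)..t, exp (-(τ • F)) (g τ)
      = exp (-(t • F)) (z t) - exp (-((0:ℝ) • F)) (z 0) := by
    refine intervalIntegral.integral_eq_sub_of_hasDerivAt
      (f := fun u : ℝ => exp (-(u • F)) (z u)) (fun τ hτ => ?_) hint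
    rw [Set.uIcc_of_le ht] at hτ
    exact hφderiv τ hτ.1
  have hexp0 : exp (-((0:ℝ) • F)) (z 0) = z 0 := by
    have h0 : (-((0:ℝ) • F)) = 0 := by rw [show (0:ℝ) • F = 0 from zero_smul ℝ F, neg_zero]
    rw [h0, exp_zero, ContinuousLinearMap.one_apply]
  have hz_eq : z t = exp (t • F) (z 0) + ∫ τ in (0:ℝ)..t, exp ((t - τ) • F) (g τ) := by
    have h1 : exp (t • F) (exp (-(t • F)) (z t)) = z t := by
      rw [← ContinuousLinearMap.mul_apply, myexp_inv, ContinuousLinearMap.one_apply]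
    have h2 : exp (-(t • F)) (z t) = z 0 + ∫ τ in (0:ℝ)..t, exp (-(τ • F)) (g τ) := by
      rw [hFTC, hexp0]; abel
    calc z t = exp (t • F) (exp (-(t • F)) (z t)) := h1.symm
    _ = exp (t • F) (z 0) + exp (t • F) (∫ τ in (0:ℝ)..t, exp (-(τ • F)) (g τ)) := by
        rw [h2, map_add]
    _ = exp (t • F) (z 0) + ∫ τ in (0:ℝ)..t, exp ((t - τ) • F) (g τ) := by
        congr 1
        rw [← ContinuousLinearMap.intervalIntegral_comp_comm _ hint]
        refine intervalIntegral.integral_congr fun τ _ => ?_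
        rw [← ContinuousLinearMap.mul_apply,
          show -(τ • F) = (-τ) • F from (neg_smul τ F).symm, myexp_smul_add, ← sub_eq_add_neg]
  -- norm bound on z t
  have hbnd_cont : Continuous fun τ : ℝ => κ * Real.exp (-μ * (t - τ)) * C := by
    fun_prop
  have hinner_cont : Continuous fun τ : ℝ => exp ((t - τ) • F) (g τ) :=
    (exp_continuous.comp ((continuous_const.sub continuous_id).smul continuous_const)).clm_apply hgc
  have hznorm : ‖z t‖ ≤ κ * Real.exp (-μ * t) * ‖z 0‖
      + ∫ τ in (0:ℝ)..t, κ * Real.exp (-μ * (t - τ)) * C := by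
    rw [hz_eq]
    refine (norm_add_le _ _).trans (add_le_add ?_ ?_)
    · exact ((exp (t • F)).le_opNorm _).trans
        (mul_le_mul_of_nonneg_right (hFdecay t ht) (norm_nonneg _))
    · refine (intervalIntegral.norm_integral_le_integral_norm ht).trans ?_
      refine intervalIntegral.integral_mono_on ht (hinner_cont.norm.intervalIntegrable 0 t)
        (hbnd_cont.intervalIntegrable 0 t) fun τ hτ => ?_
      refine ((exp ((t - τ) • F)).le_opNorm _).trans ?_
      have h4 : ‖exp ((t - τ) • F)‖ ≤ κ * Real.exp (-μ * (t - τ)) :=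
        hFdecay (t - τ) (sub_nonneg.2 hτ.2)
      exact mul_le_mul h4 (hgbound τ) (norm_nonneg _) (by positivity)
  have hz0 : ‖z 0‖ ≤ ebar0 + ‖H‖ * ρbar :=
    (norm_add_le _ _).trans (add_le_add hinit
      ((H.le_opNorm _).trans (mul_le_mul_of_nonneg_left (hρbound 0) (norm_nonneg H))))
  have hsplit : e t + ρ t = z t - H (ρ t) + ρ t := by simp only [hzdef, add_sub_cancel_right]
  calc ‖e t + ρ t‖ = ‖z t - H (ρ t) + ρ t‖ := by rw [hsplit]
  _ ≤ ‖z t‖ + ‖H (ρ t)‖ + ‖ρ t‖ :=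
      (norm_add_le _ _).trans (add_le_add_left (norm_sub_le _ _) _)
  _ ≤ (κ * Real.exp (-μ * t) * ‖z 0‖ + ∫ τ in (0:ℝ)..t, κ * Real.exp (-μ * (t - τ)) * C)
      + ‖H‖ * ρbar + ρbar := by
      refine add_le_add (add_le_add hznorm ?_) (hρbound t)
      exact (H.le_opNorm _).trans (mul_le_mul_of_nonneg_left (hρbound t) (norm_nonneg H))
  _ ≤ _ := by
      have h5 : κ * Real.exp (-μ * t) * ‖z 0‖ ≤ κ * Real.exp (-μ * t) * (ebar0 + ‖H‖ * ρbar) :=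
        mul_le_mul_of_nonneg_left hz0 (by positivity)
      have h6 : (∫ τ in (0:ℝ)..t, κ * Real.exp (-μ * (t - τ)) * C)
          = ∫ τ in (0:ℝ)..t, κ * Real.exp (-μ * (t - τ)) * (‖S‖ * wbar + ‖S * B * K - Khat‖ * ρbar) := by
        rw [hC, hG]
      rw [h6] at *
      linarith
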